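/- arXiv:2303.04762 — 5 statements merged into one kernel-verified Lean document; each statement's English description precedes it below -/
import Mathlib

section
/- In the integral sum graph G_{r,s} on vertex set {r,...,0,...,s} with r < 0 < s and n = |r|+s+1 vertices, a positive vertex i satisfies: deg(i) = n - i - 1 if 1 ≤ i ≤ ⌊s/2⌋, and deg(i) = n - i if ⌊s/2⌋ < i ≤ s. -/
/-- The integral sum graph on vertex set `{r, ..., s} ⊆ ℤ`:
distinct `u, v` are adjacent iff `u + v` also lies in `{r, ..., s}`. -/
def intervalSumGraph (r s : ℤ) : SimpleGraph ℤ where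
  Adj u v := u ≠ v ∧ u ∈ Set.Icc r s ∧ v ∈ Set.Icc r s ∧ u + v ∈ Set.Icc r s
  symm := ⟨by
    rintro u v ⟨h1, h2, h3, h4⟩
    exact ⟨h1.symm, h3, h2, by rwa [add_comm]⟩⟩
  loopless := ⟨fun u h => h.1 rfl⟩

/-- The graph `H^{-i,s}_{m,j}`: obtained from the integral sum graph `G_{-i,s}`
by deleting the vertices `-m` and `j` and all edges whose endpoint labels sum
to `-m` or to `j`. -/
def HGraph (i s m j : ℤ) : SimpleGraph ℤ where
  Adj u v := u ≠ v ∧ u ∈ Set.Icc (-i) s ∧ v ∈ Set.Icc (-i) s ∧ u + v ∈ Set.Icc (-i) s ∧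
    u ≠ -m ∧ v ≠ -m ∧ u ≠ j ∧ v ≠ j ∧ u + v ≠ -m ∧ u + v ≠ j
  symm := ⟨by
    rintro u v ⟨h1, h2, h3, h4, h5, h6, h7, h8, h9, h10⟩
    exact ⟨h1.symm, h3, h2, by rwa [add_comm], h6, h5, h8, h7,
      by rwa [add_comm], by rwa [add_comm]⟩⟩
  loopless := ⟨fun u h => h.1 rfl⟩

/-- The chromatic index of a graph: the least `n` such that there is a proper
edge coloring with `n` colors (distinct edges sharing a vertex get distinct colors). -/
noncomputable def chromaticIndex {V : Type*} (G : SimpleGraph V) : ℕ :=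
  sInf {n : ℕ | ∃ c : Sym2 V → Fin n,
    ∀ e ∈ G.edgeSet, ∀ f ∈ G.edgeSet, e ≠ f → (∃ v, v ∈ e ∧ v ∈ f) → c e ≠ c f}

/-- The sum of the two endpoint labels of an edge. -/
def edgeSum (e : Sym2 ℤ) : ℤ := Sym2.lift ⟨fun a b => a + b, fun a b => add_comm a b⟩ e

/-- The edge-sum chromatic number: the number of nonempty edge-sum color classes. -/
noncomputable def edgeSumChromatic (G : SimpleGraph ℤ) : ℕ :=
  {k : ℤ | ∃ e ∈ G.edgeSet, edgeSum e = k}.ncard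



lemma nbhd_eq (r s i : ℤ) (hr : r < 0) (h1 : 1 ≤ i) (h2 : i ≤ s) :
    (intervalSumGraph r s).neighborSet i = Set.Icc r (s - i) \ {i} := by
  ext v
  simp only [SimpleGraph.mem_neighborSet, intervalSumGraph, Set.mem_Icc, Set.mem_diff,
    Set.mem_singleton_iff]
  constructor <;> intro h <;> omega

lemma icc_ncard (a b : ℤ) : (Set.Icc a b).ncard = (b + 1 - a).toNat := by
  rw [← Finset.coe_Icc, Set.ncard_coe_finset, Int.card_Icc]

theorem degree_pos (r s i : ℤ) (hr : r < 0) (hs : 0 < s) :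
    (1 ≤ i → i ≤ s / 2 →
      (((intervalSumGraph r s).neighborSet i).ncard : ℤ) = (|r| + s + 1) - i - 1) ∧
    (s / 2 < i → i ≤ s →
      (((intervalSumGraph r s).neighborSet i).ncard : ℤ) = (|r| + s + 1) - i) := by
  constructor
  · intro h1 h2
    have h2' : 2 * i ≤ s := by omega
    rw [nbhd_eq r s i hr h1 (by omega),
      Set.ncard_diff_singleton_of_mem (by simp [Set.mem_Icc]; omega),
      icc_ncard]
    have habs : |r| = -r := abs_of_neg hr
    omega
  · intro h1 h2
    have h1' : 1 ≤ i := by omega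
    rw [nbhd_eq r s i hr h1' h2,
      Set.diff_singleton_eq_self (by simp [Set.mem_Icc]; omega), icc_ncard]
    have habs : |r| = -r := abs_of_neg hr
    omega
end

section
/- If |r| + s ≥ 3 with r < 0 < s, then the number of edges of the integral sum graph G_{r,s} equals (1/4)(r² + s² - 3r + 3s - 4rs) - (1/2)(⌊|r|/2⌋ + ⌊s/2⌋). -/
noncomputable def P (r s : ℤ) : Finset (ℤ × ℤ) :=
  (Finset.Icc r s ×ˢ Finset.Icc r s).filter
    (fun p => p.1 < p.2 ∧ r ≤ p.1 + p.2 ∧ p.1 + p.2 ≤ s)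

lemma mem_P {r s : ℤ} {p : ℤ × ℤ} :
    p ∈ P r s ↔ (r ≤ p.1 ∧ p.1 ≤ s) ∧ (r ≤ p.2 ∧ p.2 ≤ s) ∧ p.1 < p.2 ∧
      r ≤ p.1 + p.2 ∧ p.1 + p.2 ≤ s := by
  simp [P, Finset.mem_filter, Finset.mem_product, Finset.mem_Icc, and_assoc]

lemma edgeSet_eq (r s : ℤ) :
    (intervalSumGraph r s).edgeSet = ↑((P r s).image (fun p => Sym2.mk p.1 p.2)) := by
  ext e
  induction e using Sym2.ind with
  | _ u v =>
    simp only [SimpleGraph.mem_edgeSet, intervalSumGraph, Finset.coe_image,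
      Set.mem_image, Finset.mem_coe, Set.mem_Icc]
    constructor
    · rintro ⟨h1, h2, h3, h4⟩
      rcases lt_or_gt_of_ne h1 with h | h
      · exact ⟨(u, v), mem_P.mpr ⟨h2, h3, h, h4.1, h4.2⟩, rfl⟩
      · exact ⟨(v, u), mem_P.mpr ⟨h3, h2, h, by rw [add_comm]; exact h4.1,
          by rw [add_comm]; exact h4.2⟩, Sym2.eq_swap⟩
    · rintro ⟨⟨a, b⟩, hp, he⟩
      rw [mem_P] at hp
      obtain ⟨ha, hb, hlt, hs1, hs2⟩ := hp
      have : (a = u ∧ b = v) ∨ (a = v ∧ b = u) := by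
        have he := (Sym2.mk_eq_mk_iff (p := (a, b)) (q := (u, v))).mp he
        rwa [Prod.mk.injEq, Prod.swap_prod_mk, Prod.mk.injEq] at he
      rcases this with ⟨rfl, rfl⟩ | ⟨rfl, rfl⟩
      · exact ⟨hlt.ne, ⟨ha.1, ha.2⟩, ⟨hb.1, hb.2⟩, hs1, hs2⟩
      · exact ⟨hlt.ne', ⟨hb.1, hb.2⟩, ⟨ha.1, ha.2⟩, by omega, by omega⟩

lemma ncard_eq_cardP (r s : ℤ) :
    (intervalSumGraph r s).edgeSet.ncard = (P r s).card := by
  rw [edgeSet_eq, Set.ncard_coe_finset]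
  apply Finset.card_image_of_injOn
  intro p hp q hq h
  simp only [Finset.mem_coe] at hp hq
  rw [mem_P] at hp hq
  rw [Sym2.mk_eq_mk_iff] at h
  rcases h with h | h
  · exact h
  · have := hp.2.2.1; have := hq.2.2.1
    have h1 : p.1 = q.2 := congrArg Prod.fst h
    have h2 : p.2 = q.1 := congrArg Prod.snd h
    ext <;> omega

lemma base_card : (P (-1) 1).card = 3 := by decide

lemma step_s (r s : ℤ) (hr : r < 0) (hs : 0 < s) :
    ((P r (s+1)).card : ℤ) = (P r s).card + (1 - r) + s / 2 := by
  classical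
  have hA : P r (s+1) = (P r s ∪ (Finset.Icc r 0).image (fun u => (u, s+1)))
      ∪ (Finset.Icc 1 (s/2)).image (fun u => (u, s+1-u)) := by
    ext ⟨u, v⟩
    simp only [Finset.mem_union, Finset.mem_image, Finset.mem_Icc, mem_P, Prod.mk.injEq]
    constructor
    · rintro ⟨⟨h1, h2⟩, ⟨h3, h4⟩, h5, h6, h7⟩
      rcases le_or_gt v s with hv | hv
      · rcases le_or_gt (u + v) s with hsum | hsum
        · exact Or.inl (Or.inl (by omega))
        · exact Or.inr ⟨u, by omega⟩
      · exact Or.inl (Or.inr ⟨u, by omega⟩)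
    · rintro ((⟨⟨h1, h2⟩, ⟨h3, h4⟩, h5, h6, h7⟩ | ⟨a, ⟨ha1, ha2⟩, ha3, ha4⟩) |
        ⟨a, ⟨ha1, ha2⟩, ha3, ha4⟩) <;> omega
  have d1 : Disjoint (P r s) ((Finset.Icc r 0).image (fun u => (u, s+1))) := by
    rw [Finset.disjoint_left]
    rintro ⟨u, v⟩ hp hq
    rw [mem_P] at hp
    simp only [Finset.mem_image, Finset.mem_Icc, Prod.mk.injEq] at hq
    obtain ⟨a, ⟨ha1, ha2⟩, ha3, ha4⟩ := hq
    omega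
  have d2 : Disjoint (P r s ∪ (Finset.Icc r 0).image (fun u => (u, s+1)))
      ((Finset.Icc 1 (s/2)).image (fun u => (u, s+1-u))) := by
    rw [Finset.disjoint_left]
    rintro ⟨u, v⟩ hp hq
    simp only [Finset.mem_union, Finset.mem_image, Finset.mem_Icc, mem_P,
      Prod.mk.injEq] at hp hq
    obtain ⟨a, ⟨ha1, ha2⟩, ha3, ha4⟩ := hq
    rcases hp with ⟨⟨h1, h2⟩, ⟨h3, h4⟩, h5, h6, h7⟩ | ⟨b, ⟨hb1, hb2⟩, hb3, hb4⟩ <;> omega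
  have c1 : ((Finset.Icc r 0).image (fun u => (u, s+1))).card = (Finset.Icc r 0).card :=
    Finset.card_image_of_injective _ (fun a b h => (Prod.mk.injEq _ _ _ _ ▸ h).1)
  have c2 : ((Finset.Icc 1 (s/2)).image (fun u => (u, s+1-u))).card
      = (Finset.Icc 1 (s/2)).card :=
    Finset.card_image_of_injective _ (fun a b h => (Prod.mk.injEq _ _ _ _ ▸ h).1)
  rw [hA, Finset.card_union_of_disjoint d2, Finset.card_union_of_disjoint d1, c1, c2,
    Int.card_Icc, Int.card_Icc]
  push_cast
  omega

lemma step_r (r s : ℤ) (hr : r ≤ -1) (hs : 0 < s) :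
    ((P (r-1) s).card : ℤ) = (P r s).card + (s + 1) + (-r) / 2 := by
  classical
  have hA : P (r-1) s = (P r s ∪ (Finset.Icc 0 s).image (fun v => (r-1, v)))
      ∪ (Finset.Icc r ((r-2)/2)).image (fun u => (u, r-1-u)) := by
    ext ⟨u, v⟩
    simp only [Finset.mem_union, Finset.mem_image, Finset.mem_Icc, mem_P, Prod.mk.injEq]
    constructor
    · rintro ⟨⟨h1, h2⟩, ⟨h3, h4⟩, h5, h6, h7⟩
      rcases le_or_gt r u with hu | hu
      · rcases le_or_gt r (u + v) with hsum | hsum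
        · exact Or.inl (Or.inl (by omega))
        · exact Or.inr ⟨u, by omega⟩
      · exact Or.inl (Or.inr ⟨v, by omega⟩)
    · rintro ((⟨⟨h1, h2⟩, ⟨h3, h4⟩, h5, h6, h7⟩ | ⟨a, ⟨ha1, ha2⟩, ha3, ha4⟩) |
        ⟨a, ⟨ha1, ha2⟩, ha3, ha4⟩) <;> omega
  have d1 : Disjoint (P r s) ((Finset.Icc 0 s).image (fun v => (r-1, v))) := by
    rw [Finset.disjoint_left]
    rintro ⟨u, v⟩ hp hq
    rw [mem_P] at hp
    simp only [Finset.mem_image, Finset.mem_Icc, Prod.mk.injEq] at hq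
    obtain ⟨a, ⟨ha1, ha2⟩, ha3, ha4⟩ := hq
    omega
  have d2 : Disjoint (P r s ∪ (Finset.Icc 0 s).image (fun v => (r-1, v)))
      ((Finset.Icc r ((r-2)/2)).image (fun u => (u, r-1-u))) := by
    rw [Finset.disjoint_left]
    rintro ⟨u, v⟩ hp hq
    simp only [Finset.mem_union, Finset.mem_image, Finset.mem_Icc, mem_P,
      Prod.mk.injEq] at hp hq
    obtain ⟨a, ⟨ha1, ha2⟩, ha3, ha4⟩ := hq
    rcases hp with ⟨⟨h1, h2⟩, ⟨h3, h4⟩, h5, h6, h7⟩ | ⟨b, ⟨hb1, hb2⟩, hb3, hb4⟩ <;> omega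
  have c1 : ((Finset.Icc 0 s).image (fun v => (r-1, v))).card = (Finset.Icc 0 s).card :=
    Finset.card_image_of_injective _ (fun a b h => (Prod.mk.injEq _ _ _ _ ▸ h).2)
  have c2 : ((Finset.Icc r ((r-2)/2)).image (fun u => (u, r-1-u))).card
      = (Finset.Icc r ((r-2)/2)).card :=
    Finset.card_image_of_injective _ (fun a b h => (Prod.mk.injEq _ _ _ _ ▸ h).1)
  rw [hA, Finset.card_union_of_disjoint d2, Finset.card_union_of_disjoint d1, c1, c2,
    Int.card_Icc, Int.card_Icc]
  push_cast
  omega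

lemma main_card : ∀ r s : ℤ, r < 0 → 0 < s →
    4 * ((P r s).card : ℤ) =
      r^2 + s^2 - 3*r + 3*s - 4*r*s - 2*((-r)/2 + s/2) := by
  have base : ∀ s : ℤ, 0 < s → 4 * ((P (-1) s).card : ℤ) =
      (-1)^2 + s^2 - 3*(-1) + 3*s - 4*(-1)*s - 2*((-(-1))/2 + s/2) := by
    intro s hs
    have hs' : 1 ≤ s := hs
    refine Int.le_induction (motive := fun t _ => 4 * ((P (-1) t).card : ℤ) =
      (-1)^2 + t^2 - 3*(-1) + 3*t - 4*(-1)*t - 2*((-(-1))/2 + t/2)) ?_ ?_ s hs'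
    · show 4 * ((P (-1) (1:ℤ)).card : ℤ) = _
      rw [base_card]; decide
    · intro n hn ih
      rw [step_s (-1) n (by norm_num) hn]
      have hdiv : ((n:ℤ)+1)/2 + n/2 = n := by omega
      set a := ((n:ℤ)+1)/2 with ha
      set b := (n:ℤ)/2 with hb
      push_cast
      push_cast at ih
      linear_combination ih + 2*hdiv
  intro r s hrneg hs
  have hr : r ≤ -1 := by omega
  refine Int.le_induction_down (motive := fun t _ => 4 * ((P t s).card : ℤ) =
    t^2 + s^2 - 3*t + 3*s - 4*t*s - 2*((-t)/2 + s/2)) ?_ ?_ r hr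
  · exact base s hs
  · intro n hn ih
    rw [step_r n s hn hs]
    have hdiv : (-((n:ℤ)-1))/2 + (-n)/2 = -n := by omega
    set a := (-((n:ℤ)-1))/2 with ha
    set b := (-(n:ℤ))/2 with hb
    push_cast
    push_cast at ih
    linear_combination ih + 2*hdiv

theorem edge_count (r s : ℤ) (hr : r < 0) (hs : 0 < s) (h3 : 3 ≤ |r| + s) :
    (((intervalSumGraph r s).edgeSet.ncard : ℚ)) =
      ((r : ℚ) ^ 2 + (s : ℚ) ^ 2 - 3 * r + 3 * s - 4 * r * s) / 4
        - ((((|r| / 2 : ℤ) : ℚ)) + (((s / 2 : ℤ) : ℚ))) / 2 := by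
  have h := main_card r s hr hs
  rw [ncard_eq_cardP, abs_of_neg hr]
  have h' : (4:ℚ) * ((P r s).card : ℚ) =
      ((r:ℚ)^2 + s^2 - 3*r + 3*s - 4*r*s) - 2*((((-r)/2 : ℤ):ℚ) + ((s/2 : ℤ):ℚ)) := by
    exact_mod_cast h
  linarith
end

section
/- For every s with 3 ≤ s ≤ 8, the chromatic index of H^{-2,s}_{1,2} equals s. -/
lemma eq_of_mem_of_edgeSum_eq (e f : Sym2 ℤ) (v : ℤ) (he : v ∈ e) (hf : v ∈ f)
    (h : edgeSum e = edgeSum f) : e = f := by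
  induction e using Sym2.ind with | _ a b =>
  induction f using Sym2.ind with | _ c d =>
  rw [Sym2.mem_iff] at he hf
  have h' : a + b = c + d := h
  rw [Sym2.eq_iff]
  rcases he with rfl | rfl <;> rcases hf with h'' | h'' <;> omega

lemma edgeSum_valid (s : ℤ) (e : Sym2 ℤ) (he : e ∈ (HGraph 2 s 1 2).edgeSet) :
    edgeSum e = -2 ∨ edgeSum e = 1 ∨ (3 ≤ edgeSum e ∧ edgeSum e ≤ s) := by
  induction e using Sym2.ind with | _ a b =>
  have h : a ≠ b ∧ a ∈ Set.Icc (-2:ℤ) s ∧ b ∈ Set.Icc (-2:ℤ) s ∧ a + b ∈ Set.Icc (-2:ℤ) s ∧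
      a ≠ -1 ∧ b ≠ -1 ∧ a ≠ 2 ∧ b ≠ 2 ∧ a + b ≠ -1 ∧ a + b ≠ 2 := he
  simp only [Set.mem_Icc] at h
  have hs : edgeSum s(a,b) = a + b := rfl
  rw [hs]
  omega

lemma adj_zero (s k : ℤ) (hk : k = -2 ∨ k = 1 ∨ (3 ≤ k ∧ k ≤ s)) (hs : 3 ≤ s) :
    (HGraph 2 s 1 2).Adj 0 k := by
  show (0:ℤ) ≠ k ∧ (0:ℤ) ∈ Set.Icc (-2:ℤ) s ∧ k ∈ Set.Icc (-2:ℤ) s ∧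
    (0:ℤ) + k ∈ Set.Icc (-2:ℤ) s ∧ (0:ℤ) ≠ -1 ∧ k ≠ -1 ∧ (0:ℤ) ≠ 2 ∧ k ≠ 2 ∧
    (0:ℤ) + k ≠ -1 ∧ (0:ℤ) + k ≠ 2
  simp only [Set.mem_Icc]
  omega

def cmap (s : ℕ) (hs : 3 ≤ s) (k : ℤ) : Fin s :=
  ⟨if k = 1 then 1 else min (k - 1).toNat (s - 1), by split <;> omega⟩

lemma cmap_inj (s : ℕ) (hs : 3 ≤ s) {a b : ℤ}
    (hA : a = -2 ∨ a = 1 ∨ (3 ≤ a ∧ a ≤ (s:ℤ)))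
    (hB : b = -2 ∨ b = 1 ∨ (3 ≤ b ∧ b ≤ (s:ℤ)))
    (h : cmap s hs a = cmap s hs b) : a = b := by
  unfold cmap at h
  rw [Fin.mk.injEq] at h
  split_ifs at h <;> omega

theorem chromaticIndex_H_2_s_1_2 (s : ℕ) (h3 : 3 ≤ s) (h8 : s ≤ 8) :
    chromaticIndex (HGraph 2 (s : ℤ) 1 2) = s := by
  unfold chromaticIndex
  have hmem : s ∈ {n : ℕ | ∃ c : Sym2 ℤ → Fin n,
      ∀ e ∈ (HGraph 2 (s:ℤ) 1 2).edgeSet, ∀ f ∈ (HGraph 2 (s:ℤ) 1 2).edgeSet,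
        e ≠ f → (∃ v, v ∈ e ∧ v ∈ f) → c e ≠ c f} := by
    refine ⟨fun e => cmap s h3 (edgeSum e), ?_⟩
    intro e he f hf hne ⟨v, hv1, hv2⟩ hc
    apply hne
    apply eq_of_mem_of_edgeSum_eq e f v hv1 hv2
    exact cmap_inj s h3 (edgeSum_valid (s:ℤ) e he) (edgeSum_valid (s:ℤ) f hf) hc
  refine le_antisymm (Nat.sInf_le hmem) (le_csInf ⟨s, hmem⟩ ?_)
  rintro n ⟨c, hc⟩
  classical
  set T : Finset ℤ := {-2, 1} ∪ Finset.Icc 3 (s:ℤ) with hT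
  have hTcard : T.card = s := by
    rw [hT, Finset.card_union_of_disjoint, Int.card_Icc]
    · have h2 : ({-2, 1} : Finset ℤ).card = 2 := rfl
      rw [h2]; omega
    · simp only [Finset.disjoint_left, Finset.mem_insert, Finset.mem_singleton,
        Finset.mem_Icc]
      rintro a (rfl | rfl) <;> omega
  have hmemT : ∀ k ∈ T, k = -2 ∨ k = 1 ∨ (3 ≤ k ∧ k ≤ (s:ℤ)) := by
    intro k hk
    simp only [hT, Finset.mem_union, Finset.mem_insert, Finset.mem_singleton,
      Finset.mem_Icc] at hk
    omega
  have key : T.card ≤ (Finset.univ : Finset (Fin n)).card := by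
    apply Finset.card_le_card_of_injOn (fun k => c s(0, k)) (fun a _ => Finset.mem_univ _)
    intro a ha b hb hab
    by_contra hne
    have hea : s(0, a) ∈ (HGraph 2 (s:ℤ) 1 2).edgeSet :=
      adj_zero _ _ (hmemT a ha) (by exact_mod_cast h3)
    have heb : s(0, b) ∈ (HGraph 2 (s:ℤ) 1 2).edgeSet :=
      adj_zero _ _ (hmemT b hb) (by exact_mod_cast h3)
    refine hc _ hea _ heb ?_ ⟨0, ?_, ?_⟩ hab
    · intro h
      rw [Sym2.eq_iff] at h
      rcases h with ⟨-, h⟩ | ⟨h1, h2⟩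
      · exact hne h
      · exact hne (h2.trans h1)
    · exact Sym2.mem_mk_left _ _
    · exact Sym2.mem_mk_left _ _
  simpa [hTcard] using key
end

section
/- For all s ≥ 3 and j ∈ {1,2,3}, the chromatic index of H^{-2,s}_{1,j} equals s. -/
/-- The modified edge-sum coloring function used for the upper bound. -/
def gfun (n : ℕ) (j : ℤ) (e : Sym2 ℤ) : ℤ :=
  if e = s(-2, 2) then (if j = (n : ℤ) then 1 else (n : ℤ))
  else if e = s(-2, 0) ∨ e = s(2, (n : ℤ) - 2) then j
  else edgeSum e

lemma gfun_mk (n : ℕ) (j : ℤ) (x y : ℤ) :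
    gfun n j s(x, y) =
      if (x = -2 ∧ y = 2) ∨ (x = 2 ∧ y = -2) then (if j = (n : ℤ) then 1 else (n : ℤ))
      else if ((x = -2 ∧ y = 0) ∨ (x = 0 ∧ y = -2)) ∨
          ((x = 2 ∧ y = (n : ℤ) - 2) ∨ (x = (n : ℤ) - 2 ∧ y = 2)) then j
      else x + y := by
  simp only [gfun, Sym2.eq_iff, edgeSum, Sym2.lift_mk]

lemma hgraph_adj {n : ℕ} {j u v : ℤ} (h : (HGraph 2 (n : ℤ) 1 j).Adj u v) :
    u ≠ v ∧ (-2 ≤ u ∧ u ≤ n) ∧ (-2 ≤ v ∧ v ≤ n) ∧ (-2 ≤ u + v ∧ u + v ≤ n) ∧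
    u ≠ -1 ∧ v ≠ -1 ∧ u ≠ j ∧ v ≠ j ∧ u + v ≠ -1 ∧ u + v ≠ j := by
  simpa only [HGraph, Set.mem_Icc] using h

lemma gfun_range (n : ℕ) (hn : 3 ≤ n) (j : ℤ) (hj1 : 1 ≤ j) (hj3 : j ≤ 3)
    {u v : ℤ} (h : (HGraph 2 (n : ℤ) 1 j).Adj u v) :
    1 ≤ gfun n j s(u, v) ∧ gfun n j s(u, v) ≤ n := by
  have H := hgraph_adj h
  rw [gfun_mk]
  split_ifs <;> omega

set_option maxHeartbeats 2000000 in
lemma gfun_inj (n : ℕ) (hn : 3 ≤ n) (j : ℤ) (hj1 : 1 ≤ j) (hj3 : j ≤ 3)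
    {u a b : ℤ} (ha : (HGraph 2 (n : ℤ) 1 j).Adj u a) (hb : (HGraph 2 (n : ℤ) 1 j).Adj u b)
    (h : gfun n j s(u, a) = gfun n j s(u, b)) : a = b := by
  have Ha := hgraph_adj ha
  have Hb := hgraph_adj hb
  rw [gfun_mk, gfun_mk] at h
  split_ifs at h <;> omega

lemma adj_zero_s9 (n : ℕ) (hn : 3 ≤ n) (j : ℤ) (hj1 : 1 ≤ j) (hj3 : j ≤ 3)
    {k : ℤ} (hk : k = -2 ∨ (1 ≤ k ∧ k ≤ n ∧ k ≠ j)) :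
    (HGraph 2 (n : ℤ) 1 j).Adj 0 k := by
  simp only [HGraph, Set.mem_Icc]
  omega

theorem chromaticIndex_H_2_s_1_j (s : ℕ) (hs : 3 ≤ s) (j : ℤ)
    (hj : j ∈ ({1, 2, 3} : Set ℤ)) :
    chromaticIndex (HGraph 2 (s : ℤ) 1 j) = s := by
  have hj' : j = 1 ∨ j = 2 ∨ j = 3 := by simpa using hj
  have hj1 : 1 ≤ j := by omega
  have hj3 : j ≤ 3 := by omega
  have hspos : 0 < s := by omega
  -- the coloring
  set c : Sym2 ℤ → Fin s := fun e =>
    if h : (gfun s j e - 1).toNat < s then ⟨(gfun s j e - 1).toNat, h⟩ else ⟨0, hspos⟩ with hc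
  have hmem : s ∈ {n : ℕ | ∃ c : Sym2 ℤ → Fin n,
      ∀ e ∈ (HGraph 2 (s : ℤ) 1 j).edgeSet, ∀ f ∈ (HGraph 2 (s : ℤ) 1 j).edgeSet,
        e ≠ f → (∃ v, v ∈ e ∧ v ∈ f) → c e ≠ c f} := by
    refine ⟨c, ?_⟩
    rintro e he f hf hef ⟨v, hve, hvf⟩
    set a := Sym2.Mem.other hve with ha
    set b := Sym2.Mem.other hvf with hb
    have hea : s(v, a) = e := Sym2.other_spec hve
    have hfb : s(v, b) = f := Sym2.other_spec hvf
    rw [← hea] at he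
    rw [← hfb] at hf
    rw [SimpleGraph.mem_edgeSet] at he hf
    have hra := gfun_range s hs j hj1 hj3 he
    have hrb := gfun_range s hs j hj1 hj3 hf
    intro hcc
    apply hef
    rw [← hea, ← hfb]
    have e1 : c s(v, a) = ⟨(gfun s j s(v, a) - 1).toNat, by omega⟩ := dif_pos (by omega)
    have e2 : c s(v, b) = ⟨(gfun s j s(v, b) - 1).toNat, by omega⟩ := dif_pos (by omega)
    have h3 : c s(v, a) = c s(v, b) := by rw [hea, hfb]; exact hcc
    rw [e1, e2] at h3
    have hval' : (gfun s j s(v, a) - 1).toNat = (gfun s j s(v, b) - 1).toNat := by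
      simpa using h3
    have hg : gfun s j s(v, a) = gfun s j s(v, b) := by omega
    rw [gfun_inj s hs j hj1 hj3 he hf hg]
  refine le_antisymm (Nat.sInf_le hmem) (le_csInf ⟨s, hmem⟩ ?_)
  rintro n ⟨cn, hcn⟩
  -- lower bound: the s edges at vertex 0
  set K : Finset ℤ := insert (-2) ((Finset.Icc 1 (s : ℤ)).erase j) with hK
  have hKmem : ∀ k ∈ K, k = -2 ∨ (1 ≤ k ∧ k ≤ s ∧ k ≠ j) := by
    intro k hk
    simp only [hK, Finset.mem_insert, Finset.mem_erase, Finset.mem_Icc] at hk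
    rcases hk with h | h
    · exact Or.inl h
    · exact Or.inr ⟨h.2.1, h.2.2, h.1⟩
  have hKcard : K.card = s := by
    have h1 : j ∈ Finset.Icc (1 : ℤ) (s : ℤ) := Finset.mem_Icc.mpr ⟨hj1, by omega⟩
    have h2 : (-2 : ℤ) ∉ (Finset.Icc (1 : ℤ) (s : ℤ)).erase j := by
      simp only [Finset.mem_erase, Finset.mem_Icc]
      omega
    rw [hK, Finset.card_insert_of_notMem h2, Finset.card_erase_of_mem h1, Int.card_Icc]
    omega
  have hedge : ∀ k ∈ K, s(0, k) ∈ (HGraph 2 (s : ℤ) 1 j).edgeSet := by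
    intro k hk
    rw [SimpleGraph.mem_edgeSet]
    exact adj_zero_s9 s hs j hj1 hj3 (hKmem k hk)
  have hinj : Set.InjOn (fun k => cn s(0, k)) (K : Set ℤ) := by
    intro k hk k' hk' hEq
    by_contra hne
    have hdist : s((0 : ℤ), k) ≠ s((0 : ℤ), k') := by
      intro hcontra
      have hKk := hKmem k hk
      have hKk' := hKmem k' hk'
      rcases Sym2.eq_iff.mp hcontra with ⟨_, h⟩ | ⟨h1, h2⟩ <;> omega
    exact hcn _ (hedge k hk) _ (hedge k' hk') hdist
      ⟨0, Sym2.mem_mk_left 0 k, Sym2.mem_mk_left 0 k'⟩ hEq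
  calc s = K.card := hKcard.symm
    _ ≤ (Finset.univ : Finset (Fin n)).card :=
        Finset.card_le_card_of_injOn _ (fun k _ => Finset.mem_univ _) hinj
    _ = n := by simp
end

section
/- For all s ≥ 4, m ∈ {1,2} and j ∈ {1,2,3}, the chromatic index of H^{-3,s}_{m,j} equals s+1. -/
/-- auxiliary relabeling of vertices -/
def sigFun (j v : ℤ) : ℤ :=
  if v = 0 then 0 else if v = -3 then 1 else if v < 0 then 2
  else if v < j then v + 2 else v + 1

lemma sigFun_bounds (j v s : ℤ) (hj : j = 1 ∨ j = 2 ∨ j = 3) (hs : 4 ≤ s)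
    (h1 : -3 ≤ v) (h2 : v ≤ s - 1) : 0 ≤ sigFun j v ∧ sigFun j v ≤ s := by
  unfold sigFun; split_ifs <;> omega

lemma sigFun_small (j v : ℤ) (h1 : -3 ≤ v) (h2 : v ≤ 0) :
    0 ≤ sigFun j v ∧ sigFun j v ≤ 2 := by
  unfold sigFun; split_ifs <;> omega

lemma sigFun_inj (m j v w : ℤ) (hm : m = 1 ∨ m = 2) (hj : j = 1 ∨ j = 2 ∨ j = 3)
    (hv1 : -3 ≤ v) (hv2 : v ≠ -m) (hv3 : v ≠ j)
    (hw1 : -3 ≤ w) (hw2 : w ≠ -m) (hw3 : w ≠ j)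
    (h : sigFun j v = sigFun j w) : v = w := by
  unfold sigFun at h; split_ifs at h <;> omega

lemma dvd_small (n d : ℤ) (h : n ∣ d) (h2 : -n < d) (h3 : d < n) : d = 0 := by
  by_contra hd
  have h5 : 0 < |d| := abs_pos.2 hd
  have h6 : n ≤ |d| := Int.le_of_dvd h5 ((dvd_abs n d).2 h)
  have h7 : |d| < n := abs_lt.2 ⟨h2, h3⟩
  omega

/-- the edge color as an integer (before reduction mod `s+1`) -/
def fFun (s j u v : ℤ) : ℤ :=
  if u = s then 2 * sigFun j v else if v = s then 2 * sigFun j u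
  else sigFun j u + sigFun j v

lemma fFun_symm (s j u v : ℤ) : fFun s j u v = fFun s j v u := by
  unfold fFun
  by_cases h1 : u = s <;> by_cases h2 : v = s <;> simp [h1, h2] <;> ring

lemma key (s : ℕ) (hs : 4 ≤ s) (m j : ℤ) (hm : m = 1 ∨ m = 2)
    (hj : j = 1 ∨ j = 2 ∨ j = 3) (u v w : ℤ)
    (h1 : (HGraph 3 (s : ℤ) m j).Adj u v) (h2 : (HGraph 3 (s : ℤ) m j).Adj u w)
    (hvw : v ≠ w) : ¬ ((s : ℤ) + 1) ∣ (fFun s j u v - fFun s j u w) := by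
  intro hdvd
  obtain ⟨a1, a2, a3, a4, a5, a6, a7, a8, a9, a10⟩ := h1
  obtain ⟨b1, b2, b3, b4, b5, b6, b7, b8, b9, b10⟩ := h2
  simp only [Set.mem_Icc] at a2 a3 a4 b2 b3 b4
  have hs' : (4 : ℤ) ≤ (s : ℤ) := by exact_mod_cast hs
  unfold fFun at hdvd
  by_cases hus : u = (s : ℤ)
  · rw [if_pos hus, if_pos hus] at hdvd
    have hv0 : v ≤ 0 := by omega
    have hw0 : w ≤ 0 := by omega
    have sv := sigFun_small j v a3.1 hv0
    have sw := sigFun_small j w b3.1 hw0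
    have h0 : 2 * sigFun j v - 2 * sigFun j w = 0 :=
      dvd_small _ _ hdvd (by omega) (by omega)
    exact hvw (sigFun_inj m j v w hm hj a3.1 a6 a8 b3.1 b6 b8 (by omega))
  · rw [if_neg hus, if_neg hus] at hdvd
    have su := sigFun_bounds j u (s : ℤ) hj hs' a2.1 (by omega)
    by_cases hvs : v = (s : ℤ)
    · rw [if_pos hvs] at hdvd
      have hws : w ≠ (s : ℤ) := fun h => hvw (hvs.trans h.symm)
      rw [if_neg hws] at hdvd
      have sw := sigFun_bounds j w (s : ℤ) hj hs' b3.1 (by omega)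
      have h0 : 2 * sigFun j u - (sigFun j u + sigFun j w) = 0 :=
        dvd_small _ _ hdvd (by omega) (by omega)
      exact b1 (sigFun_inj m j u w hm hj a2.1 a5 a7 b3.1 b6 b8 (by omega))
    · rw [if_neg hvs] at hdvd
      have sv := sigFun_bounds j v (s : ℤ) hj hs' a3.1 (by omega)
      by_cases hws : w = (s : ℤ)
      · rw [if_pos hws] at hdvd
        have h0 : sigFun j u + sigFun j v - 2 * sigFun j u = 0 :=
          dvd_small _ _ hdvd (by omega) (by omega)
        exact a1 (sigFun_inj m j u v hm hj a2.1 a5 a7 a3.1 a6 a8 (by omega))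
      · rw [if_neg hws] at hdvd
        have sw := sigFun_bounds j w (s : ℤ) hj hs' b3.1 (by omega)
        have h0 : sigFun j u + sigFun j v - (sigFun j u + sigFun j w) = 0 :=
          dvd_small _ _ hdvd (by omega) (by omega)
        exact hvw (sigFun_inj m j v w hm hj a3.1 a6 a8 b3.1 b6 b8 (by omega))

theorem chromaticIndex_H_3_s_m_j (s : ℕ) (hs : 4 ≤ s) (m j : ℤ)
    (hm : m ∈ ({1, 2} : Set ℤ)) (hj : j ∈ ({1, 2, 3} : Set ℤ)) :
    chromaticIndex (HGraph 3 (s : ℤ) m j) = s + 1 := by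
  simp only [Set.mem_insert_iff, Set.mem_singleton_iff] at hm hj
  have hs' : (4 : ℤ) ≤ (s : ℤ) := by exact_mod_cast hs
  -- the coloring
  have hbound : ∀ e : Sym2 ℤ,
      ((Sym2.lift ⟨fFun s j, fFun_symm s j⟩ e) % ((s : ℤ) + 1)).toNat < s + 1 := by
    intro e
    have h1 : 0 ≤ (Sym2.lift ⟨fFun s j, fFun_symm s j⟩ e) % ((s : ℤ) + 1) :=
      Int.emod_nonneg _ (by omega)
    have h2 : (Sym2.lift ⟨fFun s j, fFun_symm s j⟩ e) % ((s : ℤ) + 1) < (s : ℤ) + 1 :=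
      Int.emod_lt_of_pos _ (by omega)
    omega
  set c : Sym2 ℤ → Fin (s + 1) := fun e =>
    ⟨((Sym2.lift ⟨fFun s j, fFun_symm s j⟩ e) % ((s : ℤ) + 1)).toNat, hbound e⟩ with hc
  have hproper : ∀ e ∈ (HGraph 3 (s : ℤ) m j).edgeSet,
      ∀ f ∈ (HGraph 3 (s : ℤ) m j).edgeSet, e ≠ f → (∃ v, v ∈ e ∧ v ∈ f) →
      c e ≠ c f := by
    -- helper : both edges written with shared vertex first
    have main : ∀ u v w : ℤ, (HGraph 3 (s : ℤ) m j).Adj u v →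
        (HGraph 3 (s : ℤ) m j).Adj u w → s(u, v) ≠ s(u, w) →
        c s(u, v) ≠ c s(u, w) := by
      intro u v w h1 h2 hne heq
      have hvw : v ≠ w := fun h => hne (by rw [h])
      have heq' : fFun s j u v % ((s : ℤ) + 1) = fFun s j u w % ((s : ℤ) + 1) := by
        have := congrArg Fin.val heq
        simp only [hc, Sym2.lift_mk] at this
        have n1 : 0 ≤ fFun s j u v % ((s : ℤ) + 1) := Int.emod_nonneg _ (by omega)
        have n2 : 0 ≤ fFun s j u w % ((s : ℤ) + 1) := Int.emod_nonneg _ (by omega)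
        omega
      have hdvd : ((s : ℤ) + 1) ∣ (fFun s j u v - fFun s j u w) :=
        Int.ModEq.dvd (Int.ModEq.symm heq')
      exact key s hs m j hm hj u v w h1 h2 hvw hdvd
    intro e he f hf hef hshare
    induction e using Sym2.ind with
    | _ a b =>
    induction f using Sym2.ind with
    | _ x y =>
    rw [SimpleGraph.mem_edgeSet] at he hf
    obtain ⟨z, hz1, hz2⟩ := hshare
    rw [Sym2.mem_iff] at hz1 hz2
    rcases hz1 with rfl | rfl <;> rcases hz2 with h | h
    · subst h; exact main z b y he hf hef
    · subst h
      rw [Sym2.eq_swap (a := x) (b := z)] at hef ⊢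
      exact main z b x he hf.symm hef
    · subst h
      rw [Sym2.eq_swap (a := a) (b := z)] at hef ⊢
      exact main z a y he.symm hf hef
    · subst h
      rw [Sym2.eq_swap (a := a) (b := z), Sym2.eq_swap (a := x) (b := z)] at hef ⊢
      exact main z a x he.symm hf.symm hef
  have hmem : s + 1 ∈ {n : ℕ | ∃ c : Sym2 ℤ → Fin n,
      ∀ e ∈ (HGraph 3 (s : ℤ) m j).edgeSet, ∀ f ∈ (HGraph 3 (s : ℤ) m j).edgeSet,
      e ≠ f → (∃ v, v ∈ e ∧ v ∈ f) → c e ≠ c f} := ⟨c, hproper⟩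
  unfold chromaticIndex
  apply le_antisymm
  · exact Nat.sInf_le hmem
  · apply le_csInf ⟨s + 1, hmem⟩
    rintro n ⟨d, hd⟩
    -- lower bound via the degree of vertex 0
    set T : Finset ℤ := (((Finset.Icc (-3 : ℤ) (s : ℤ)).erase 0).erase (-m)).erase j
      with hT
    have hTcard : T.card = s + 1 := by
      rw [hT]
      rw [Finset.card_erase_of_mem, Finset.card_erase_of_mem,
        Finset.card_erase_of_mem, Int.card_Icc]
      · omega
      · rw [Finset.mem_Icc]; omega
      · rw [Finset.mem_erase, Finset.mem_Icc]
        constructor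
        · omega
        · omega
      · rw [Finset.mem_erase, Finset.mem_erase, Finset.mem_Icc]
        refine ⟨by omega, by omega, by omega, by omega⟩
    have hadj : ∀ v ∈ T, (HGraph 3 (s : ℤ) m j).Adj 0 v := by
      intro v hv
      rw [hT, Finset.mem_erase, Finset.mem_erase, Finset.mem_erase,
        Finset.mem_Icc] at hv
      obtain ⟨hv1, hv2, hv3, hv4, hv5⟩ := hv
      refine ⟨by omega, ?_, ?_, ?_, by omega, by omega, by omega, by omega,
        by omega, by omega⟩ <;> rw [Set.mem_Icc] <;> omega
    have hinj : Set.InjOn (fun v => d s(0, v)) T := by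
      intro v hv w hw heq
      by_contra hvw
      have hne : s(0, v) ≠ s(0, w) := by
        intro h
        exact hvw (Sym2.congr_right.mp h)
      exact hd s(0, v) ((SimpleGraph.mem_edgeSet _).mpr (hadj v hv)) s(0, w)
        ((SimpleGraph.mem_edgeSet _).mpr (hadj w hw)) hne
        ⟨0, by simp, by simp⟩ heq
    have := Finset.card_le_card_of_injOn (fun v => d s(0, v))
      (fun a _ => Finset.mem_univ _) hinj
    rw [hTcard] at this
    simpa using this
end
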